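/- arXiv:1903.03460 — 2 statements merged into one kernel-verified Lean document; each statement's English description precedes it below -/
import Mathlib

section
/- Let S⁵ = {(z₀,z₁,z₂) ∈ ℂ³ : |z₀|² + |z₁|² + |z₂|² = 1}, and define z ~ w iff there exists λ ∈ ℂ with |λ| = 1 such that w = (λz₀, λz₁, λz₂) or w = (λ·conj(z₀), λ·conj(z₁), λ·conj(z₂)). Then the quotient space S⁵/~ is homeomorphic to S⁴. (Kuiper–Massey theorem: ℂP²/conj ≅ S⁴, where conj is the involution of complex conjugation of all homogeneous coordinates.) -/
/-- The unit sphere `S⁵ ⊂ ℂ³`. -/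
abbrev S5 : Type :=
  {z : ℂ × ℂ × ℂ // ‖z.1‖ ^ 2 + ‖z.2.1‖ ^ 2 + ‖z.2.2‖ ^ 2 = 1}

/-- `z ~ λz` and `z ~ λ·conj(z)` for unit complex numbers `λ`. -/
def rel10 (x y : S5) : Prop :=
  ∃ lam : ℂ, ‖lam‖ = 1 ∧
    ((y.1.1 = lam * x.1.1 ∧ y.1.2.1 = lam * x.1.2.1 ∧ y.1.2.2 = lam * x.1.2.2) ∨
     (y.1.1 = lam * (starRingEnd ℂ) x.1.1 ∧ y.1.2.1 = lam * (starRingEnd ℂ) x.1.2.1 ∧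
      y.1.2.2 = lam * (starRingEnd ℂ) x.1.2.2))

open Metric Set Filter ComplexConjugate

noncomputable section

abbrev E5 := EuclideanSpace ℝ (Fin 5)
abbrev E3 := EuclideanSpace ℝ (Fin 3)

def qf (v : E5) (a b c : ℝ) : ℝ :=
  (v 0 + 1/3) * a^2 + (v 1 + 1/3) * b^2 + (1/3 - v 0 - v 1) * c^2
    + 2 * v 2 * (a*b) + 2 * v 3 * (a*c) + 2 * v 4 * (b*c)

def Kset : Set E5 := {v | ∀ a b c : ℝ, 0 ≤ qf v a b c}

def fmap (z : ℂ × ℂ × ℂ) : E5 :=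
  WithLp.toLp 2 ![z.1.re^2 + z.1.im^2 - 1/3,
    z.2.1.re^2 + z.2.1.im^2 - 1/3,
    z.1.re * z.2.1.re + z.1.im * z.2.1.im,
    z.1.re * z.2.2.re + z.1.im * z.2.2.im,
    z.2.1.re * z.2.2.re + z.2.1.im * z.2.2.im]

lemma fmap_0 (z : ℂ × ℂ × ℂ) : fmap z 0 = z.1.re^2 + z.1.im^2 - 1/3 := rfl
lemma fmap_1 (z : ℂ × ℂ × ℂ) : fmap z 1 = z.2.1.re^2 + z.2.1.im^2 - 1/3 := rfl
lemma fmap_2 (z : ℂ × ℂ × ℂ) : fmap z 2 = z.1.re * z.2.1.re + z.1.im * z.2.1.im := rfl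
lemma fmap_3 (z : ℂ × ℂ × ℂ) : fmap z 3 = z.1.re * z.2.2.re + z.1.im * z.2.2.im := rfl
lemma fmap_4 (z : ℂ × ℂ × ℂ) : fmap z 4 = z.2.1.re * z.2.2.re + z.2.1.im * z.2.2.im := rfl

lemma normsq_c (ζ : ℂ) : ‖ζ‖^2 = ζ.re^2 + ζ.im^2 := by
  rw [Complex.sq_norm, Complex.normSq_apply]; ring

lemma continuous_fmap : Continuous fmap := by
  refine (PiLp.continuous_toLp 2 _).comp ?_
  apply continuous_pi
  intro i
  fin_cases i
  · show Continuous fun z : ℂ × ℂ × ℂ => z.1.re^2 + z.1.im^2 - 1/3; fun_prop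
  · show Continuous fun z : ℂ × ℂ × ℂ => z.2.1.re^2 + z.2.1.im^2 - 1/3; fun_prop
  · show Continuous fun z : ℂ × ℂ × ℂ => z.1.re * z.2.1.re + z.1.im * z.2.1.im; fun_prop
  · show Continuous fun z : ℂ × ℂ × ℂ => z.1.re * z.2.2.re + z.1.im * z.2.2.im; fun_prop
  · show Continuous fun z : ℂ × ℂ × ℂ => z.2.1.re * z.2.2.re + z.2.1.im * z.2.2.im; fun_prop

lemma qf_fmap (z : ℂ × ℂ × ℂ) (hz : ‖z.1‖^2 + ‖z.2.1‖^2 + ‖z.2.2‖^2 = 1) (a b c : ℝ) :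
    qf (fmap z) a b c = (a*z.1.re + b*z.2.1.re + c*z.2.2.re)^2
      + (a*z.1.im + b*z.2.1.im + c*z.2.2.im)^2 := by
  rw [normsq_c, normsq_c, normsq_c] at hz
  simp only [qf, fmap_0, fmap_1, fmap_2, fmap_3, fmap_4]
  linear_combination (-(c^2)) * hz

lemma fmap_mem_K (z : ℂ × ℂ × ℂ) (hz : ‖z.1‖^2 + ‖z.2.1‖^2 + ‖z.2.2‖^2 = 1) :
    fmap z ∈ Kset := by
  intro a b c
  rw [qf_fmap z hz]
  positivity

lemma abs_apply_le_norm (v : E5) (i : Fin 5) : |v i| ≤ ‖v‖ := by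
  rw [EuclideanSpace.norm_eq, ← Real.sqrt_sq_eq_abs]
  apply Real.sqrt_le_sqrt
  have h := Finset.single_le_sum (f := fun j => ‖v j‖^2) (fun j _ => by positivity)
    (Finset.mem_univ i)
  simpa [Real.norm_eq_abs, sq_abs] using h

lemma K_coord_bound {v : E5} (hv : v ∈ Kset) :
    |v 0| ≤ 1 ∧ |v 1| ≤ 1 ∧ |v 2| ≤ 1 ∧ |v 3| ≤ 1 ∧ |v 4| ≤ 1 := by
  have d0 := hv 1 0 0
  have d1 := hv 0 1 0
  have d2 := hv 0 0 1
  have s2p := hv 1 1 0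
  have s2m := hv 1 (-1) 0
  have s3p := hv 1 0 1
  have s3m := hv 1 0 (-1)
  have s4p := hv 0 1 1
  have s4m := hv 0 1 (-1)
  simp only [qf] at d0 d1 d2 s2p s2m s3p s3m s4p s4m
  norm_num at d0 d1 d2 s2p s2m s3p s3m s4p s4m
  refine ⟨?_, ?_, ?_, ?_, ?_⟩ <;> rw [abs_le] <;> constructor <;> linarith

lemma bounded_K : Bornology.IsBounded Kset := by
  apply Metric.isBounded_closedBall (x := (0:E5)) (r := 3) |>.subset
  intro v hv
  rw [Metric.mem_closedBall, dist_zero_right, EuclideanSpace.norm_eq]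
  have h9 : Real.sqrt 9 = 3 := by
    rw [show (9:ℝ) = 3^2 by norm_num, Real.sqrt_sq (by norm_num)]
  rw [← h9]
  apply Real.sqrt_le_sqrt
  rw [Fin.sum_univ_five]
  obtain ⟨b0, b1, b2, b3, b4⟩ := K_coord_bound hv
  rw [abs_le] at b0 b1 b2 b3 b4
  simp only [Real.norm_eq_abs, sq_abs]
  nlinarith [b0.1, b0.2, b1.1, b1.2, b2.1, b2.2, b3.1, b3.2, b4.1, b4.2]
lemma zero_mem_interior_K : (0 : E5) ∈ interior Kset := by
  rw [mem_interior]
  refine ⟨Metric.ball 0 (1/13), ?_, Metric.isOpen_ball, Metric.mem_ball_self (by norm_num)⟩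
  intro v hv a b c
  rw [Metric.mem_ball, dist_zero_right] at hv
  have hb : ∀ i, |v i| ≤ 1/13 := fun i => (abs_apply_le_norm v i).trans hv.le
  have h0 := abs_le.1 (hb 0); have h1 := abs_le.1 (hb 1); have h2 := abs_le.1 (hb 2)
  have h3 := abs_le.1 (hb 3); have h4 := abs_le.1 (hb 4)
  simp only [qf]
  nlinarith [sq_nonneg a, sq_nonneg b, sq_nonneg c, sq_nonneg (a+b), sq_nonneg (a-b),
    sq_nonneg (a+c), sq_nonneg (a-c), sq_nonneg (b+c), sq_nonneg (b-c),
    mul_le_mul_of_nonneg_right h0.2 (sq_nonneg a), mul_le_mul_of_nonneg_right h0.1 (sq_nonneg a)]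

lemma continuous_qf (a b c : ℝ) : Continuous fun v : E5 => qf v a b c := by
  unfold qf; fun_prop

lemma isClosed_K : IsClosed Kset := by
  have h : Kset = ⋂ (a : ℝ), ⋂ (b : ℝ), ⋂ (c : ℝ), {v : E5 | 0 ≤ qf v a b c} := by
    ext v; simp [Kset, Set.mem_iInter]
  rw [h]
  exact isClosed_iInter fun a => isClosed_iInter fun b => isClosed_iInter fun c =>
    isClosed_le continuous_const (continuous_qf a b c)

lemma convex_K : Convex ℝ Kset := by
  intro v hv w hw s t hs ht hst
  intro a b c
  have expand : qf (s • v + t • w) a b c = s * qf v a b c + t * qf w a b c := by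
    simp only [qf, PiLp.add_apply, PiLp.smul_apply, smul_eq_mul]
    linear_combination (-(a^2 + b^2 + c^2)/3) * hst
  rw [expand]
  have := hv a b c; have := hw a b c
  positivity

lemma exists_orth (x0 x1 x2 y0 y1 y2 : ℝ) :
    ∃ a b c : ℝ, ¬(a = 0 ∧ b = 0 ∧ c = 0) ∧
      a*x0 + b*x1 + c*x2 = 0 ∧ a*y0 + b*y1 + c*y2 = 0 := by
  set M : Matrix (Fin 2) (Fin 3) ℝ := !![x0, x1, x2; y0, y1, y2] with hM
  have hker : LinearMap.ker M.mulVecLin ≠ ⊥ := by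
    apply LinearMap.ker_ne_bot_of_finrank_lt
    simp [Module.finrank_pi]
  obtain ⟨u, hu, hune⟩ := Submodule.exists_mem_ne_zero_of_ne_bot hker
  rw [LinearMap.mem_ker] at hu
  refine ⟨u 0, u 1, u 2, ?_, ?_, ?_⟩
  · rintro ⟨h0, h1, h2⟩
    apply hune
    ext i
    fin_cases i <;> assumption
  · have := congrFun hu 0
    simpa [Matrix.mulVecLin, Matrix.mulVec, dotProduct, Fin.sum_univ_three, hM, mul_comm]
      using this
  · have := congrFun hu 1
    simpa [Matrix.mulVecLin, Matrix.mulVec, dotProduct, Fin.sum_univ_three, hM, mul_comm]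
      using this

def Dvec (a b c : ℝ) : E5 := WithLp.toLp 2 ![a^2 - c^2, b^2 - c^2, a*b, a*c, b*c]

lemma Dvec_0 (a b c : ℝ) : Dvec a b c 0 = a^2 - c^2 := rfl
lemma Dvec_1 (a b c : ℝ) : Dvec a b c 1 = b^2 - c^2 := rfl
lemma Dvec_2 (a b c : ℝ) : Dvec a b c 2 = a*b := rfl
lemma Dvec_3 (a b c : ℝ) : Dvec a b c 3 = a*c := rfl
lemma Dvec_4 (a b c : ℝ) : Dvec a b c 4 = b*c := rfl

lemma qf_sub_smul (v : E5) (t a b c : ℝ) :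
    qf (v - t • Dvec a b c) a b c = qf v a b c -
      t * ((a^2-c^2)^2 + (b^2-c^2)^2 + 2*(a*b)^2 + 2*(a*c)^2 + 2*(b*c)^2) := by
  simp only [qf, PiLp.sub_apply, PiLp.smul_apply, smul_eq_mul,
    Dvec_0, Dvec_1, Dvec_2, Dvec_3, Dvec_4]
  ring

lemma cval_pos {a b c : ℝ} (h : ¬(a = 0 ∧ b = 0 ∧ c = 0)) :
    0 < (a^2-c^2)^2 + (b^2-c^2)^2 + 2*(a*b)^2 + 2*(a*c)^2 + 2*(b*c)^2 := by
  rcases lt_or_eq_of_le (by positivity :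
    (0:ℝ) ≤ (a^2-c^2)^2 + (b^2-c^2)^2 + 2*(a*b)^2 + 2*(a*c)^2 + 2*(b*c)^2) with hlt | heq
  · exact hlt
  exfalso
  apply h
  have h1 : (a^2-c^2)^2 = 0 := by nlinarith [sq_nonneg (a^2-c^2), sq_nonneg (b^2-c^2), sq_nonneg (a*b), sq_nonneg (a*c), sq_nonneg (b*c)]
  have h2 : (b^2-c^2)^2 = 0 := by nlinarith [sq_nonneg (a^2-c^2), sq_nonneg (b^2-c^2), sq_nonneg (a*b), sq_nonneg (a*c), sq_nonneg (b*c)]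
  have h3 : (a*b)^2 = 0 := by nlinarith [sq_nonneg (a^2-c^2), sq_nonneg (b^2-c^2), sq_nonneg (a*b), sq_nonneg (a*c), sq_nonneg (b*c)]
  have e1 : a^2 = c^2 := by nlinarith [h1]
  have e2 : b^2 = c^2 := by nlinarith [h2]
  have e3 : a * b = 0 := by nlinarith [h3]
  rcases mul_eq_zero.1 e3 with h0 | h0
  · have hc : c = 0 := by nlinarith [sq_nonneg c]
    have hb : b = 0 := by nlinarith [sq_nonneg b]
    exact ⟨h0, hb, hc⟩
  · have hc : c = 0 := by nlinarith [sq_nonneg c]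
    have ha : a = 0 := by nlinarith [sq_nonneg a]
    exact ⟨ha, h0, hc⟩

lemma fmap_not_interior (z : ℂ × ℂ × ℂ) (hz : ‖z.1‖^2 + ‖z.2.1‖^2 + ‖z.2.2‖^2 = 1) :
    fmap z ∉ interior Kset := by
  obtain ⟨a, b, c, hne, hx, hy⟩ := exists_orth z.1.re z.2.1.re z.2.2.re z.1.im z.2.1.im z.2.2.im
  have hq0 : qf (fmap z) a b c = 0 := by
    rw [qf_fmap z hz]
    rw [show a*z.1.re + b*z.2.1.re + c*z.2.2.re = 0 from hx,
        show a*z.1.im + b*z.2.1.im + c*z.2.2.im = 0 from hy]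
    ring
  intro hmem
  obtain ⟨ε, hε, hball⟩ := Metric.isOpen_iff.1 isOpen_interior _ hmem
  set D := Dvec a b c
  set t := ε / (2 * (‖D‖ + 1)) with ht
  have htpos : 0 < t := by
    apply div_pos hε
    positivity
  have hdist : dist (fmap z - t • D) (fmap z) < ε := by
    rw [dist_eq_norm]
    have : fmap z - t • D - fmap z = -(t • D) := by abel
    rw [this, norm_neg, norm_smul, Real.norm_eq_abs, abs_of_pos htpos, ht]
    rw [div_mul_eq_mul_div, div_lt_iff₀ (by positivity)]
    nlinarith [norm_nonneg D, hε]
  have hmemK : fmap z - t • D ∈ Kset := interior_subset (hball (Metric.mem_ball.2 hdist))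
  have := hmemK a b c
  rw [qf_sub_smul, hq0] at this
  nlinarith [cval_pos hne, this]

lemma qf_smul (v : E5) (t a b c : ℝ) : qf v (t*a) (t*b) (t*c) = t^2 * qf v a b c := by
  simp only [qf]; ring

lemma continuous_Q : Continuous fun p : E5 × E3 => qf p.1 (p.2 0) (p.2 1) (p.2 2) := by
  unfold qf; fun_prop

lemma exists_null (v : E5) (hv : v ∈ Kset) (hni : v ∉ interior Kset) :
    ∃ a b c : ℝ, ¬(a = 0 ∧ b = 0 ∧ c = 0) ∧ qf v a b c = 0 := by
  have hfr : v ∈ closure Ksetᶜ := by rw [closure_compl]; exact hni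
  obtain ⟨g, hgmem, hgtend⟩ := mem_closure_iff_seq_limit.1 hfr
  have hn : ∀ n, ∃ a b c : ℝ, qf (g n) a b c < 0 := by
    intro n
    have := hgmem n
    simp only [mem_compl_iff, Kset, mem_setOf_eq, not_forall, not_le] at this
    obtain ⟨a, b, c, hq⟩ := this
    exact ⟨a, b, c, hq⟩
  choose A B C hABC using hn
  set un : ℕ → E3 := fun n => WithLp.toLp 2 (![A n, B n, C n] : Fin 3 → ℝ) with hun
  have hunne : ∀ n, ‖un n‖ ≠ 0 := by
    intro n h0
    rw [norm_eq_zero] at h0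
    have hA : A n = 0 := congrFun (congrArg WithLp.ofLp h0) (0 : Fin 3)
    have hB : B n = 0 := congrFun (congrArg WithLp.ofLp h0) (1 : Fin 3)
    have hC : C n = 0 := congrFun (congrArg WithLp.ofLp h0) (2 : Fin 3)
    have := hABC n
    rw [hA, hB, hC] at this
    simp only [qf] at this
    nlinarith [this]
  set U : ℕ → E3 := fun n => (‖un n‖)⁻¹ • un n with hU
  have hUsph : ∀ n, U n ∈ sphere (0:E3) 1 := by
    intro n
    rw [mem_sphere_zero_iff_norm, hU]
    rw [norm_smul, norm_inv, norm_norm, inv_mul_cancel₀ (hunne n)]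
  have hUq : ∀ n, qf (g n) (U n 0) (U n 1) (U n 2) < 0 := by
    intro n
    have h1 : U n 0 = (‖un n‖)⁻¹ * A n := rfl
    have h2 : U n 1 = (‖un n‖)⁻¹ * B n := rfl
    have h3 : U n 2 = (‖un n‖)⁻¹ * C n := rfl
    rw [h1, h2, h3, qf_smul]
    have hpos : 0 < ((‖un n‖)⁻¹)^2 := by
      have := (hunne n)
      positivity
    exact mul_neg_of_pos_of_neg hpos (hABC n)
  obtain ⟨u, husph, φ, hφ, hutend⟩ :=
    (isCompact_sphere (0:E3) 1).tendsto_subseq hUsph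
  have hq0 : qf v (u 0) (u 1) (u 2) ≤ 0 := by
    have hpair : Tendsto (fun n => (g (φ n), U (φ n))) atTop (nhds (v, u)) :=
      (hgtend.comp hφ.tendsto_atTop).prodMk_nhds hutend
    have hcomp := (continuous_Q.tendsto (v, u)).comp hpair
    exact le_of_tendsto hcomp (Eventually.of_forall fun n => (hUq (φ n)).le)
  have hq : qf v (u 0) (u 1) (u 2) = 0 := le_antisymm hq0 (hv _ _ _)
  refine ⟨u 0, u 1, u 2, ?_, hq⟩
  rintro ⟨h0, h1, h2⟩
  have hn1 : ‖u‖ = 1 := mem_sphere_zero_iff_norm.1 husph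
  rw [EuclideanSpace.norm_eq, Fin.sum_univ_three, h0, h1, h2] at hn1
  simp at hn1

lemma quad_zero {A B : ℝ} (h : ∀ t : ℝ, 0 ≤ A * t^2 + B * t) : B = 0 := by
  have hA : 0 ≤ A := by have h1 := h 1; have h2 := h (-1); nlinarith
  by_contra hB
  have hA1 : (0:ℝ) < A + 1 := by linarith
  have hval : A * (-B/(A+1))^2 + B * (-B/(A+1)) = -(B^2/(A+1)^2) := by
    field_simp
    ring
  have ht := h (-B / (A + 1))
  rw [hval] at ht
  have hpos : 0 < B^2/(A+1)^2 := by positivity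
  linarith

lemma null_system {v : E5} (hv : v ∈ Kset) {a b c : ℝ} (hq : qf v a b c = 0) :
    (v 0 + 1/3)*a + v 2*b + v 3*c = 0 ∧
    v 2*a + (v 1 + 1/3)*b + v 4*c = 0 ∧
    v 3*a + v 4*b + (1/3 - v 0 - v 1)*c = 0 := by
  refine ⟨?_, ?_, ?_⟩
  · have h := quad_zero (A := qf v 1 0 0) (B := 2*((v 0 + 1/3)*a + v 2*b + v 3*c)) ?_
    · linarith
    · intro t
      have := hv (a + t) b c
      have expand : qf v (a + t) b c = qf v 1 0 0 * t^2
          + (2*((v 0 + 1/3)*a + v 2*b + v 3*c)) * t + qf v a b c := by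
        simp only [qf]; ring
      rw [expand, hq, add_zero] at this
      linarith
  · have h := quad_zero (A := qf v 0 1 0) (B := 2*(v 2*a + (v 1 + 1/3)*b + v 4*c)) ?_
    · linarith
    · intro t
      have := hv a (b + t) c
      have expand : qf v a (b + t) c = qf v 0 1 0 * t^2
          + (2*(v 2*a + (v 1 + 1/3)*b + v 4*c)) * t + qf v a b c := by
        simp only [qf]; ring
      rw [expand, hq, add_zero] at this
      linarith
  · have h := quad_zero (A := qf v 0 0 1) (B := 2*(v 3*a + v 4*b + (1/3 - v 0 - v 1)*c)) ?_
    · linarith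
    · intro t
      have := hv a b (c + t)
      have expand : qf v a b (c + t) = qf v 0 0 1 * t^2
          + (2*(v 3*a + v 4*b + (1/3 - v 0 - v 1)*c)) * t + qf v a b c := by
        simp only [qf]; ring
      rw [expand, hq, add_zero] at this
      linarith

lemma exists_z_of_rep (v : E5) (x y : Fin 3 → ℝ)
    (h00 : v 0 + 1/3 = x 0^2 + y 0^2) (h11 : v 1 + 1/3 = x 1^2 + y 1^2)
    (h22 : 1/3 - v 0 - v 1 = x 2^2 + y 2^2)
    (h01 : v 2 = x 0*x 1 + y 0*y 1) (h02 : v 3 = x 0*x 2 + y 0*y 2)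
    (h12 : v 4 = x 1*x 2 + y 1*y 2) :
    ∃ z : ℂ × ℂ × ℂ, (‖z.1‖^2 + ‖z.2.1‖^2 + ‖z.2.2‖^2 = 1) ∧ fmap z = v := by
  refine ⟨(⟨x 0, y 0⟩, ⟨x 1, y 1⟩, ⟨x 2, y 2⟩), ?_, ?_⟩
  · rw [normsq_c, normsq_c, normsq_c]
    show x 0^2 + y 0^2 + (x 1^2 + y 1^2) + (x 2^2 + y 2^2) = 1
    linarith
  · ext i
    fin_cases i
    · show x 0^2 + y 0^2 - 1/3 = v 0
      linarith
    · show x 1^2 + y 1^2 - 1/3 = v 1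
      linarith
    · show x 0*x 1 + y 0*y 1 = v 2
      linarith
    · show x 0*x 2 + y 0*y 2 = v 3
      linarith
    · show x 1*x 2 + y 1*y 2 = v 4
      linarith

open Matrix in
def Mmat (v : E5) : Matrix (Fin 3) (Fin 3) ℝ :=
  !![v 0 + 1/3, v 2, v 3; v 2, v 1 + 1/3, v 4; v 3, v 4, 1/3 - v 0 - v 1]

lemma rep_from_entries (v : E5) (lam0 lam1 lam2 : ℝ)
    (hnn1 : 0 ≤ lam1) (hnn2 : 0 ≤ lam2) (hl0 : lam0 = 0)
    (c0 c1 c2 : Fin 3 → ℝ)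
    (hent : ∀ j k : Fin 3, Mmat v j k
      = lam0 * (c0 j * c0 k) + lam1 * (c1 j * c1 k) + lam2 * (c2 j * c2 k)) :
    ∃ z : ℂ × ℂ × ℂ, (‖z.1‖^2 + ‖z.2.1‖^2 + ‖z.2.2‖^2 = 1) ∧ fmap z = v := by
  have s1 : Real.sqrt lam1 * Real.sqrt lam1 = lam1 := Real.mul_self_sqrt hnn1
  have s2 : Real.sqrt lam2 * Real.sqrt lam2 = lam2 := Real.mul_self_sqrt hnn2
  have hM00 : Mmat v 0 0 = v 0 + 1/3 := rfl
  have hM11 : Mmat v 1 1 = v 1 + 1/3 := rfl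
  have hM22 : Mmat v 2 2 = 1/3 - v 0 - v 1 := rfl
  have hM01 : Mmat v 0 1 = v 2 := rfl
  have hM02 : Mmat v 0 2 = v 3 := rfl
  have hM12 : Mmat v 1 2 = v 4 := rfl
  refine exists_z_of_rep v (fun j => Real.sqrt lam1 * c1 j)
    (fun j => Real.sqrt lam2 * c2 j) ?_ ?_ ?_ ?_ ?_ ?_
  · linear_combination (-1:ℝ) * hM00 + hent 0 0 + (c0 0 * c0 0) * hl0
      - (c1 0 * c1 0) * s1 - (c2 0 * c2 0) * s2
  · linear_combination (-1:ℝ) * hM11 + hent 1 1 + (c0 1 * c0 1) * hl0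
      - (c1 1 * c1 1) * s1 - (c2 1 * c2 1) * s2
  · linear_combination (-1:ℝ) * hM22 + hent 2 2 + (c0 2 * c0 2) * hl0
      - (c1 2 * c1 2) * s1 - (c2 2 * c2 2) * s2
  · linear_combination (-1:ℝ) * hM01 + hent 0 1 + (c0 0 * c0 1) * hl0
      - (c1 0 * c1 1) * s1 - (c2 0 * c2 1) * s2
  · linear_combination (-1:ℝ) * hM02 + hent 0 2 + (c0 0 * c0 2) * hl0
      - (c1 0 * c1 2) * s1 - (c2 0 * c2 2) * s2
  · linear_combination (-1:ℝ) * hM12 + hent 1 2 + (c0 1 * c0 2) * hl0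
      - (c1 1 * c1 2) * s1 - (c2 1 * c2 2) * s2

open Matrix in
lemma frontier_rep (v : E5) (hv : v ∈ Kset) {a b c : ℝ}
    (hne : ¬(a = 0 ∧ b = 0 ∧ c = 0)) (hq : qf v a b c = 0) :
    ∃ z : ℂ × ℂ × ℂ, (‖z.1‖^2 + ‖z.2.1‖^2 + ‖z.2.2‖^2 = 1) ∧ fmap z = v := by
  obtain ⟨l0, l1, l2⟩ := null_system hv hq
  have hHerm : (Mmat v).IsHermitian := by
    ext i j
    fin_cases i <;> fin_cases j <;> rfl
  have hPSD : (Mmat v).PosSemidef := by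
    refine Matrix.PosSemidef.of_dotProduct_mulVec_nonneg hHerm fun x => ?_
    have hx := hv (x 0) (x 1) (x 2)
    have heq : star x ⬝ᵥ ((Mmat v) *ᵥ x) = qf v (x 0) (x 1) (x 2) := by
      simp [Matrix.mulVec, dotProduct, Fin.sum_univ_three, Mmat, qf]
      ring
    rw [heq]; exact hx
  have hdet : (Mmat v).det = 0 := by
    rw [← Matrix.exists_mulVec_eq_zero_iff]
    refine ⟨![a, b, c], ?_, ?_⟩
    · intro h0
      exact hne ⟨congrFun h0 0, congrFun h0 1, congrFun h0 2⟩
    · funext i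
      fin_cases i <;>
        simp [Mmat, Matrix.mulVec, dotProduct, Fin.sum_univ_three] <;> linarith
  have hnn : ∀ i, 0 ≤ hHerm.eigenvalues i := hPSD.eigenvalues_nonneg
  have hzero : ∃ i, hHerm.eigenvalues i = 0 := by
    have h := hHerm.det_eq_prod_eigenvalues
    rw [hdet] at h
    have h2 : ∏ i, hHerm.eigenvalues i = 0 := by exact_mod_cast h.symm
    obtain ⟨i, _, hi⟩ := Finset.prod_eq_zero_iff.1 h2
    exact ⟨i, hi⟩
  have hent : ∀ j k : Fin 3, Mmat v j k
      = hHerm.eigenvalues 0 * (hHerm.eigenvectorUnitary.1 j 0 * hHerm.eigenvectorUnitary.1 k 0)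
      + hHerm.eigenvalues 1 * (hHerm.eigenvectorUnitary.1 j 1 * hHerm.eigenvectorUnitary.1 k 1)
      + hHerm.eigenvalues 2 * (hHerm.eigenvectorUnitary.1 j 2 * hHerm.eigenvectorUnitary.1 k 2) := by
    intro j k
    conv_lhs => rw [hHerm.spectral_theorem]
    simp [Matrix.mul_apply, Matrix.diagonal_apply, Fin.sum_univ_three, Matrix.star_apply]
    ring
  obtain ⟨i0, hi0⟩ := hzero
  fin_cases i0
  · have hl0 : hHerm.eigenvalues 0 = 0 := hi0
    exact rep_from_entries v _ _ _ (hnn 1) (hnn 2) hl0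
      (fun j => hHerm.eigenvectorUnitary.1 j 0) (fun j => hHerm.eigenvectorUnitary.1 j 1)
      (fun j => hHerm.eigenvectorUnitary.1 j 2)
      (fun j k => by linear_combination hent j k)
  · have hl0 : hHerm.eigenvalues 1 = 0 := hi0
    exact rep_from_entries v _ _ _ (hnn 0) (hnn 2) hl0
      (fun j => hHerm.eigenvectorUnitary.1 j 1) (fun j => hHerm.eigenvectorUnitary.1 j 0)
      (fun j => hHerm.eigenvectorUnitary.1 j 2)
      (fun j k => by linear_combination hent j k)
  · have hl0 : hHerm.eigenvalues 2 = 0 := hi0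
    exact rep_from_entries v _ _ _ (hnn 0) (hnn 1) hl0
      (fun j => hHerm.eigenvectorUnitary.1 j 2) (fun j => hHerm.eigenvectorUnitary.1 j 0)
      (fun j => hHerm.eigenvectorUnitary.1 j 1)
      (fun j k => by linear_combination hent j k)

lemma helper1 (l ζ ξ : ℂ) (hl : l.re^2 + l.im^2 = 1) :
    (l*ζ).re * (l*ξ).re + (l*ζ).im * (l*ξ).im = ζ.re*ξ.re + ζ.im*ξ.im := by
  simp only [Complex.mul_re, Complex.mul_im]
  linear_combination (ζ.re*ξ.re + ζ.im*ξ.im) * hl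

lemma helper2 (l ζ ξ : ℂ) (hl : l.re^2 + l.im^2 = 1) :
    (l*conj ζ).re * (l*conj ξ).re + (l*conj ζ).im * (l*conj ξ).im
      = ζ.re*ξ.re + ζ.im*ξ.im := by
  rw [helper1 _ _ _ hl]
  simp

lemma cx_of_real {ζ ξ ζ' ξ' : ℂ} (h : ζ.re*ξ.re + ζ.im*ξ.im = ζ'.re*ξ'.re + ζ'.im*ξ'.im) :
    ζ * conj ξ + conj ζ * ξ = ζ' * conj ξ' + conj ζ' * ξ' := by
  apply Complex.ext
  · simp only [Complex.add_re, Complex.mul_re, Complex.conj_re, Complex.conj_im]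
    ring_nf
    ring_nf at h
    linarith
  · simp only [Complex.add_im, Complex.mul_im, Complex.conj_re, Complex.conj_im]
    ring

lemma fmap_respects (x y : S5) (h : rel10 x y) : fmap x.1 = fmap y.1 := by
  obtain ⟨lam, hlam, hcase⟩ := h
  have hl : lam.re^2 + lam.im^2 = 1 := by
    have h2 := normsq_c lam
    rw [hlam] at h2
    norm_num at h2
    linarith
  rcases hcase with ⟨h1, h2, h3⟩ | ⟨h1, h2, h3⟩
  · ext i
    fin_cases i
    · show x.1.1.re^2 + x.1.1.im^2 - 1/3 = y.1.1.re^2 + y.1.1.im^2 - 1/3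
      rw [h1]; linear_combination - helper1 lam x.1.1 x.1.1 hl
    · show x.1.2.1.re^2 + x.1.2.1.im^2 - 1/3 = y.1.2.1.re^2 + y.1.2.1.im^2 - 1/3
      rw [h2]; linear_combination - helper1 lam x.1.2.1 x.1.2.1 hl
    · show x.1.1.re * x.1.2.1.re + x.1.1.im * x.1.2.1.im
        = y.1.1.re * y.1.2.1.re + y.1.1.im * y.1.2.1.im
      rw [h1, h2]; linear_combination - helper1 lam x.1.1 x.1.2.1 hl
    · show x.1.1.re * x.1.2.2.re + x.1.1.im * x.1.2.2.im
        = y.1.1.re * y.1.2.2.re + y.1.1.im * y.1.2.2.im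
      rw [h1, h3]; linear_combination - helper1 lam x.1.1 x.1.2.2 hl
    · show x.1.2.1.re * x.1.2.2.re + x.1.2.1.im * x.1.2.2.im
        = y.1.2.1.re * y.1.2.2.re + y.1.2.1.im * y.1.2.2.im
      rw [h2, h3]; linear_combination - helper1 lam x.1.2.1 x.1.2.2 hl
  · ext i
    fin_cases i
    · show x.1.1.re^2 + x.1.1.im^2 - 1/3 = y.1.1.re^2 + y.1.1.im^2 - 1/3
      rw [h1]; linear_combination - helper2 lam x.1.1 x.1.1 hl
    · show x.1.2.1.re^2 + x.1.2.1.im^2 - 1/3 = y.1.2.1.re^2 + y.1.2.1.im^2 - 1/3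
      rw [h2]; linear_combination - helper2 lam x.1.2.1 x.1.2.1 hl
    · show x.1.1.re * x.1.2.1.re + x.1.1.im * x.1.2.1.im
        = y.1.1.re * y.1.2.1.re + y.1.1.im * y.1.2.1.im
      rw [h1, h2]; linear_combination - helper2 lam x.1.1 x.1.2.1 hl
    · show x.1.1.re * x.1.2.2.re + x.1.1.im * x.1.2.2.im
        = y.1.1.re * y.1.2.2.re + y.1.1.im * y.1.2.2.im
      rw [h1, h3]; linear_combination - helper2 lam x.1.1 x.1.2.2 hl
    · show x.1.2.1.re * x.1.2.2.re + x.1.2.1.im * x.1.2.2.im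
        = y.1.2.1.re * y.1.2.2.re + y.1.2.1.im * y.1.2.2.im
      rw [h2, h3]; linear_combination - helper2 lam x.1.2.1 x.1.2.2 hl
lemma pair_dichotomy {a b c d : ℂ} (hs : a + b = c + d) (hp : a * b = c * d) :
    a = c ∨ a = d := by
  have h : (a - c) * (a - d) = 0 := by linear_combination a * hs - hp
  rcases mul_eq_zero.1 h with h | h
  · exact Or.inl (sub_eq_zero.1 h)
  · exact Or.inr (sub_eq_zero.1 h)

lemma key_inj (z w : Fin 3 → ℂ)
    (h : ∀ k l, w k * conj (w l) + conj (w k) * w l = z k * conj (z l) + conj (z k) * z l)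
    (j : Fin 3) (hj : z j ≠ 0) :
    ∃ lam : ℂ, ‖lam‖ = 1 ∧
      ((∀ k, w k = lam * z k) ∨ (∀ k, w k = lam * conj (z k))) := by
  have habs : ∀ k, w k * conj (w k) = z k * conj (z k) := by
    intro k
    have h2 : (2:ℂ) * (w k * conj (w k)) = 2 * (z k * conj (z k)) := by
      linear_combination h k k + (by ring : w k * conj (w k) - conj (w k) * w k
        - (z k * conj (z k) - conj (z k) * z k) = (0:ℂ))
    have := mul_left_cancel₀ (two_ne_zero (α := ℂ)) h2
    exact this
  have dich : ∀ k l, w k * conj (w l) = z k * conj (z l) ∨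
      w k * conj (w l) = conj (z k) * z l := by
    intro k l
    refine pair_dichotomy (h k l) ?_
    calc w k * conj (w l) * (conj (w k) * w l)
        = (w k * conj (w k)) * (w l * conj (w l)) := by ring
      _ = (z k * conj (z k)) * (z l * conj (z l)) := by rw [habs, habs]
      _ = z k * conj (z l) * (conj (z k) * z l) := by ring
  have hzero : ∀ m, z m = 0 → w m = 0 := by
    intro m hm
    have := habs m
    rw [hm, zero_mul] at this
    rcases mul_eq_zero.1 this with h0 | h0
    · exact h0
    · simpa using congrArg (starRingEnd ℂ) h0
  have hwj : w j ≠ 0 := by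
    intro h0
    apply hj
    have := (habs j).symm
    rw [h0, zero_mul] at this
    rcases mul_eq_zero.1 this with h0' | h0'
    · exact h0'
    · simpa using congrArg (starRingEnd ℂ) h0'
  have hcwj : conj (w j) ≠ 0 := by simpa using hwj
  have hczj : conj (z j) ≠ 0 := by simpa using hj
  have hnormsq : Complex.normSq (w j) = Complex.normSq (z j) := by
    have := habs j
    rw [Complex.mul_conj, Complex.mul_conj] at this
    exact_mod_cast this
  have hnorm : ‖w j‖ = ‖z j‖ := by
    have h2 : ‖w j‖ ^ 2 = ‖z j‖ ^ 2 := by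
      rw [Complex.sq_norm, Complex.sq_norm, hnormsq]
    nlinarith [norm_nonneg (w j), norm_nonneg (z j)]
  by_cases hall : ∀ k, w k * conj (w j) = z k * conj (z j)
  · refine ⟨conj (z j) / conj (w j), ?_, Or.inl fun k => ?_⟩
    · rw [norm_div, RCLike.norm_conj, RCLike.norm_conj, hnorm,
        div_self (by simpa using hj : ‖z j‖ ≠ 0)]
    · rw [div_mul_eq_mul_div, eq_div_iff hcwj]
      linear_combination hall k
  · push_neg at hall
    obtain ⟨k, hk⟩ := hall
    have hk2 : w k * conj (w j) = conj (z k) * z j := (dich k j).resolve_left hk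
    have hk2c : conj (w k) * w j = z k * conj (z j) := by
      have := congrArg (starRingEnd ℂ) hk2
      simpa [mul_comm] using this
    have hne : z k * conj (z j) ≠ conj (z k) * z j := fun he => hk (hk2.trans he.symm)
    have hzk : z k ≠ 0 := by
      intro h0
      apply hne
      rw [h0]
      simp
    have main : ∀ m, w m * conj (w j) = conj (z m) * z j := by
      intro m
      rcases dich m j with hm | hm
      · by_cases hzm : z m = 0
        · rw [hzero m hzm, hzm]
          simp
        · rcases dich m k with h1 | h1
          · exfalso
            apply hne
            have E : z m * (conj (z j) * (conj (z j) * z k)) =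
                z m * (conj (z j) * (conj (z k) * z j)) := by
              linear_combination (-(z k * conj (z j))) * hm - (w m * conj (w j)) * hk2c
                + (w m * conj (w k)) * habs j + (z j * conj (z j)) * h1
            have E2 := mul_left_cancel₀ hzm E
            have E3 := mul_left_cancel₀ hczj E2
            linear_combination E3
          · have E : z k * (conj (z j) * (z m * conj (z j))) =
                z k * (conj (z j) * (conj (z m) * z j)) := by
              linear_combination (-(z k * conj (z j))) * hm - (w m * conj (w j)) * hk2c
                + (w m * conj (w k)) * habs j + (z j * conj (z j)) * h1
            have E2 := mul_left_cancel₀ hzk E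
            have E3 := mul_left_cancel₀ hczj E2
            rw [hm, E3]
      · exact hm
    refine ⟨z j / conj (w j), ?_, Or.inr fun m => ?_⟩
    · rw [norm_div, RCLike.norm_conj, hnorm,
        div_self (by simpa using hj : ‖z j‖ ≠ 0)]
    · rw [div_mul_eq_mul_div, eq_div_iff hcwj]
      linear_combination main m

lemma fmap_inj (x y : S5) (h : fmap x.1 = fmap y.1) : rel10 x y := by
  have hx := x.2; have hy := y.2
  rw [normsq_c, normsq_c, normsq_c] at hx hy
  have e0 : x.1.1.re^2 + x.1.1.im^2 - 1/3 = y.1.1.re^2 + y.1.1.im^2 - 1/3 :=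
    congrFun (congrArg WithLp.ofLp h) (0 : Fin 5)
  have e1 : x.1.2.1.re^2 + x.1.2.1.im^2 - 1/3 = y.1.2.1.re^2 + y.1.2.1.im^2 - 1/3 :=
    congrFun (congrArg WithLp.ofLp h) (1 : Fin 5)
  have e2 : x.1.1.re * x.1.2.1.re + x.1.1.im * x.1.2.1.im
      = y.1.1.re * y.1.2.1.re + y.1.1.im * y.1.2.1.im := congrFun (congrArg WithLp.ofLp h) (2 : Fin 5)
  have e3 : x.1.1.re * x.1.2.2.re + x.1.1.im * x.1.2.2.im
      = y.1.1.re * y.1.2.2.re + y.1.1.im * y.1.2.2.im := congrFun (congrArg WithLp.ofLp h) (3 : Fin 5)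
  have e4 : x.1.2.1.re * x.1.2.2.re + x.1.2.1.im * x.1.2.2.im
      = y.1.2.1.re * y.1.2.2.re + y.1.2.1.im * y.1.2.2.im := congrFun (congrArg WithLp.ofLp h) (4 : Fin 5)
  have r22 : x.1.2.2.re^2 + x.1.2.2.im^2 = y.1.2.2.re^2 + y.1.2.2.im^2 := by linarith
  set Z : Fin 3 → ℂ := ![x.1.1, x.1.2.1, x.1.2.2] with hZ
  set W : Fin 3 → ℂ := ![y.1.1, y.1.2.1, y.1.2.2] with hW
  have hkl : ∀ k l, W k * conj (W l) + conj (W k) * W l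
      = Z k * conj (Z l) + conj (Z k) * Z l := by
    intro k l
    fin_cases k <;> fin_cases l
    · exact cx_of_real (show y.1.1.re * y.1.1.re + y.1.1.im * y.1.1.im
        = x.1.1.re * x.1.1.re + x.1.1.im * x.1.1.im by linear_combination -e0)
    · exact cx_of_real (show y.1.1.re * y.1.2.1.re + y.1.1.im * y.1.2.1.im
        = x.1.1.re * x.1.2.1.re + x.1.1.im * x.1.2.1.im by linear_combination -e2)
    · exact cx_of_real (show y.1.1.re * y.1.2.2.re + y.1.1.im * y.1.2.2.im
        = x.1.1.re * x.1.2.2.re + x.1.1.im * x.1.2.2.im by linear_combination -e3)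
    · exact cx_of_real (show y.1.2.1.re * y.1.1.re + y.1.2.1.im * y.1.1.im
        = x.1.2.1.re * x.1.1.re + x.1.2.1.im * x.1.1.im by linear_combination -e2)
    · exact cx_of_real (show y.1.2.1.re * y.1.2.1.re + y.1.2.1.im * y.1.2.1.im
        = x.1.2.1.re * x.1.2.1.re + x.1.2.1.im * x.1.2.1.im by linear_combination -e1)
    · exact cx_of_real (show y.1.2.1.re * y.1.2.2.re + y.1.2.1.im * y.1.2.2.im
        = x.1.2.1.re * x.1.2.2.re + x.1.2.1.im * x.1.2.2.im by linear_combination -e4)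
    · exact cx_of_real (show y.1.2.2.re * y.1.1.re + y.1.2.2.im * y.1.1.im
        = x.1.2.2.re * x.1.1.re + x.1.2.2.im * x.1.1.im by linear_combination -e3)
    · exact cx_of_real (show y.1.2.2.re * y.1.2.1.re + y.1.2.2.im * y.1.2.1.im
        = x.1.2.2.re * x.1.2.1.re + x.1.2.2.im * x.1.2.1.im by linear_combination -e4)
    · exact cx_of_real (show y.1.2.2.re * y.1.2.2.re + y.1.2.2.im * y.1.2.2.im
        = x.1.2.2.re * x.1.2.2.re + x.1.2.2.im * x.1.2.2.im by linear_combination -r22)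
  have main : ∀ j : Fin 3, Z j ≠ 0 → rel10 x y := by
    intro j hj
    obtain ⟨lam, hlam, hc⟩ := key_inj Z W hkl j hj
    rcases hc with hc | hc
    · exact ⟨lam, hlam, Or.inl ⟨hc 0, hc 1, hc 2⟩⟩
    · exact ⟨lam, hlam, Or.inr ⟨hc 0, hc 1, hc 2⟩⟩
  have hex : Z 0 ≠ 0 ∨ Z 1 ≠ 0 ∨ Z 2 ≠ 0 := by
    by_contra hc
    push_neg at hc
    obtain ⟨h0, h1, h2⟩ := hc
    rw [show x.1.1 = 0 from h0, show x.1.2.1 = 0 from h1, show x.1.2.2 = 0 from h2] at hx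
    simp at hx
  rcases hex with hj | hj | hj
  · exact main 0 hj
  · exact main 1 hj
  · exact main 2 hj


instance S5_compact : CompactSpace S5 := by
  have hsub : {z : ℂ × ℂ × ℂ | ‖z.1‖ ^ 2 + ‖z.2.1‖ ^ 2 + ‖z.2.2‖ ^ 2 = 1} ⊆
      Metric.closedBall 0 1 := by
    intro z hz
    simp only [Set.mem_setOf_eq] at hz
    rw [Metric.mem_closedBall, dist_zero_right]
    rw [Prod.norm_def, Prod.norm_def]
    apply max_le
    · nlinarith [norm_nonneg z.1, norm_nonneg z.2.1, norm_nonneg z.2.2, sq_nonneg (‖z.1‖ - 1)]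
    · apply max_le
      · nlinarith [norm_nonneg z.1, norm_nonneg z.2.1, norm_nonneg z.2.2, sq_nonneg (‖z.2.1‖ - 1)]
      · nlinarith [norm_nonneg z.1, norm_nonneg z.2.1, norm_nonneg z.2.2, sq_nonneg (‖z.2.2‖ - 1)]
  have hcl : IsClosed {z : ℂ × ℂ × ℂ | ‖z.1‖ ^ 2 + ‖z.2.1‖ ^ 2 + ‖z.2.2‖ ^ 2 = 1} := by
    apply isClosed_eq ?_ continuous_const
    fun_prop
  have hcomp : IsCompact {z : ℂ × ℂ × ℂ | ‖z.1‖ ^ 2 + ‖z.2.1‖ ^ 2 + ‖z.2.2‖ ^ 2 = 1} :=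
    (isCompact_closedBall (0 : ℂ × ℂ × ℂ) 1).of_isClosed_subset hcl hsub
  exact isCompact_iff_compactSpace.mp hcomp

/-- Kuiper–Massey theorem: `ℂP²/conj ≅ S⁴`. -/
theorem CP2_quotient_conj_homeomorphic_S4 :
    Nonempty (Quot rel10 ≃ₜ Metric.sphere (0 : EuclideanSpace ℝ (Fin 5)) 1) := by
  -- the induced map on the quotient
  have resp : ∀ x y : S5, rel10 x y → fmap x.1 = fmap y.1 := fmap_respects
  set g : Quot rel10 → E5 := Quot.lift (fun z : S5 => fmap z.1) resp with hg
  have gcont : Continuous g := continuous_quot_lift _ (continuous_fmap.comp continuous_subtype_val)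
  have ginj : Function.Injective g := by
    intro p q
    induction p using Quot.ind with | _ x =>
    induction q using Quot.ind with | _ y =>
    intro h
    exact Quot.sound (fmap_inj x y h)
  have hrange : Set.range g = frontier Kset := by
    have hfr : frontier Kset = Kset \ interior Kset := isClosed_K.frontier_eq
    ext w
    constructor
    · rintro ⟨p, rfl⟩
      obtain ⟨x, rfl⟩ := Quot.exists_rep p
      rw [hfr]
      exact ⟨fmap_mem_K x.1 x.2, fmap_not_interior x.1 x.2⟩
    · intro hw
      rw [hfr] at hw
      obtain ⟨a, b, c, hne, hq⟩ := exists_null w hw.1 hw.2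
      obtain ⟨z, hz1, hz2⟩ := frontier_rep w hw.1 hne hq
      exact ⟨Quot.mk _ ⟨z, hz1⟩, hz2⟩
  have homeo1 : Quot rel10 ≃ₜ Set.range g :=
    @Continuous.homeoOfEquivCompactToT2 _ _ _ _ _ _
      (Equiv.ofInjective g ginj) (gcont.subtype_mk _)
  obtain ⟨h, -, -, himg⟩ :=
    exists_homeomorph_image_interior_closure_frontier_eq_unitBall
      convex_K ⟨0, zero_mem_interior_K⟩ bounded_K
  exact ⟨homeo1.trans ((Homeomorph.setCongr hrange).trans
    ((h.image (frontier Kset)).trans (Homeomorph.setCongr himg)))⟩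

end
end

section
/- Let S³ = {s ∈ ℍ : |s| = 1} be the group of unit quaternions, acted on by T² via (t₁,t₂)·s = t₁·s·t₂, where t₁, t₂ are complex numbers of modulus 1 acting via the standard inclusion ℂ ⊂ ℍ. Then the orbit space S³/T² (the quotient by the equivalence s ~ t₁·s·t₂) is homeomorphic to the closed interval [0,1]. -/
/-- The standard inclusion ℂ ⊂ ℍ : `z = a + b·i ↦ a + b·i ∈ ℍ`. -/
noncomputable def toQ (z : ℂ) : Quaternion ℝ := ⟨z.re, z.im, 0, 0⟩

/-- The group `S³` of unit quaternions. -/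
abbrev S3 : Type := {s : Quaternion ℝ // ‖s‖ = 1}

/-- `s ~ t₁·s·t₂` for unit complex numbers `t₁, t₂`. -/
def rel14 (x y : S3) : Prop :=
  ∃ t₁ t₂ : ℂ, ‖t₁‖ = 1 ∧ ‖t₂‖ = 1 ∧ y.1 = toQ t₁ * x.1 * toQ t₂

/- ### Auxiliary material -/

noncomputable def q2 (z w : ℂ) : Quaternion ℝ := ⟨z.re, z.im, w.re, w.im⟩

lemma key (a b z w : ℂ) :
    toQ a * q2 z w * toQ b = q2 (a*b*z) (a*(starRingEnd ℂ b)*w) := by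
  ext <;>
    simp only [Quaternion.re_mul, Quaternion.imI_mul, Quaternion.imJ_mul,
      Quaternion.imK_mul] <;>
    simp [toQ, q2, Complex.mul_re, Complex.mul_im] <;> ring

lemma norm_one_iff (s : Quaternion ℝ) : ‖s‖ = 1 ↔ Quaternion.normSq s = 1 := by
  rw [Quaternion.normSq_eq_norm_mul_self]
  constructor
  · intro h; rw [h]; ring
  · intro h; nlinarith [norm_nonneg s]

lemma cnorm_one_iff (z : ℂ) : ‖z‖ = 1 ↔ Complex.normSq z = 1 := by
  rw [Complex.norm_def]
  constructor
  · intro h; nlinarith [Real.sq_sqrt (Complex.normSq_nonneg z), Real.sqrt_nonneg (Complex.normSq z)]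
  · intro h; rw [h, Real.sqrt_one]

lemma inv_aux (a b : ℂ) (s : Quaternion ℝ) :
    (toQ a * s * toQ b).imJ^2 + (toQ a * s * toQ b).imK^2
      = Complex.normSq a * Complex.normSq b * (s.imJ^2 + s.imK^2) := by
  simp only [Quaternion.imJ_mul, Quaternion.imK_mul, Quaternion.re_mul, Quaternion.imI_mul]
  simp [toQ, Complex.normSq_apply]; ring

lemma exists_t (z w z' w' : ℂ) (hz : Complex.normSq z = Complex.normSq z')
    (hw : Complex.normSq w = Complex.normSq w') :
    ∃ t₁ t₂ : ℂ, ‖t₁‖ = 1 ∧ ‖t₂‖ = 1 ∧ t₁ * t₂ * z = z' ∧ t₁ * (starRingEnd ℂ t₂) * w = w' := by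
  by_cases hw0 : w = 0
  · have hw'0 : w' = 0 := by
      have : Complex.normSq w' = 0 := by rw [← hw, hw0, map_zero]
      exact Complex.normSq_eq_zero.mp this
    by_cases hz0 : z = 0
    · have hz'0 : z' = 0 := by
        have : Complex.normSq z' = 0 := by rw [← hz, hz0, map_zero]
        exact Complex.normSq_eq_zero.mp this
      exact ⟨1, 1, by simp, by simp, by simp [hz0, hz'0], by simp [hw0, hw'0]⟩
    · refine ⟨1, z' / z, by simp, ?_, ?_, by simp [hw0, hw'0]⟩
      · rw [cnorm_one_iff, Complex.normSq_div, ← hz, div_self]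
        exact fun h => hz0 (Complex.normSq_eq_zero.mp h)
      · field_simp
  · by_cases hz0 : z = 0
    · have hz'0 : z' = 0 := by
        have : Complex.normSq z' = 0 := by rw [← hz, hz0, map_zero]
        exact Complex.normSq_eq_zero.mp this
      refine ⟨w' / w, 1, ?_, by simp, by simp [hz0, hz'0], ?_⟩
      · rw [cnorm_one_iff, Complex.normSq_div, ← hw, div_self]
        exact fun h => hw0 (Complex.normSq_eq_zero.mp h)
      · field_simp; simp
    · set u : ℂ := z' / z with hu
      set v : ℂ := w' / w with hv
      have hz'0 : z' ≠ 0 := fun h => hz0 (by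
        have : Complex.normSq z = 0 := by rw [hz, h, map_zero]
        exact Complex.normSq_eq_zero.mp this)
      have hw'0 : w' ≠ 0 := fun h => hw0 (by
        have : Complex.normSq w = 0 := by rw [hw, h, map_zero]
        exact Complex.normSq_eq_zero.mp this)
      have hun : Complex.normSq u = 1 := by
        rw [hu, Complex.normSq_div, ← hz, div_self]
        exact fun h => hz0 (Complex.normSq_eq_zero.mp h)
      have hvn : Complex.normSq v = 1 := by
        rw [hv, Complex.normSq_div, ← hw, div_self]
        exact fun h => hw0 (Complex.normSq_eq_zero.mp h)
      obtain ⟨t, ht⟩ := IsAlgClosed.exists_pow_nat_eq (u * v) (n := 2) (by norm_num)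
      have ht0 : t ≠ 0 := by
        intro h
        rw [h] at ht
        simp at ht
        rcases ht with h | h
        · exact hz'0 (by simpa [hu, div_eq_zero_iff, hz0] using h)
        · exact hw'0 (by simpa [hv, div_eq_zero_iff, hw0] using h)
      have htn : Complex.normSq t = 1 := by
        have : Complex.normSq t ^ 2 = 1 := by
          rw [← map_pow, ht, map_mul, hun, hvn]; ring
        nlinarith [Complex.normSq_nonneg t]
      have htconj : (starRingEnd ℂ) t = t⁻¹ := by
        field_simp
        rw [mul_comm, Complex.mul_conj, htn]; simp
      refine ⟨t, u / t, (cnorm_one_iff t).mpr htn, ?_, ?_, ?_⟩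
      · rw [cnorm_one_iff, Complex.normSq_div, hun, htn]; norm_num
      · rw [hu]; field_simp
      · have hconju : (starRingEnd ℂ) u = u⁻¹ :=
          eq_inv_of_mul_eq_one_left (by rw [mul_comm, Complex.mul_conj, hun]; simp)
        have : t * (starRingEnd ℂ) (u / t) = v := by
          rw [map_div₀, htconj, hconju]
          have hu0 : u ≠ 0 := by
            intro h; exact hz'0 (by simpa [hu, div_eq_zero_iff, hz0] using h)
          field_simp
          exact ht
        rw [this, hv]; field_simp

/-- The invariant map `S³ → [0,1]`. -/
noncomputable def Fmap (s : S3) : Set.Icc (0:ℝ) 1 :=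
  ⟨s.1.imJ^2 + s.1.imK^2, by
    have h1 : Quaternion.normSq s.1 = 1 := (norm_one_iff s.1).mp s.2
    rw [Quaternion.normSq_def'] at h1
    constructor
    · positivity
    · nlinarith [sq_nonneg s.1.re, sq_nonneg s.1.imI]⟩

lemma Fmap_respects : ∀ x y : S3, rel14 x y → Fmap x = Fmap y := by
  rintro x y ⟨t₁, t₂, h1, h2, hy⟩
  have n1 : Complex.normSq t₁ = 1 := (cnorm_one_iff t₁).mp h1
  have n2 : Complex.normSq t₂ = 1 := (cnorm_one_iff t₂).mp h2
  apply Subtype.ext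
  show x.1.imJ^2 + x.1.imK^2 = y.1.imJ^2 + y.1.imK^2
  rw [hy, inv_aux, n1, n2]; ring

lemma Fmap_val (s : S3) : (Fmap s : ℝ) = s.1.imJ^2 + s.1.imK^2 := rfl

instance : CompactSpace S3 := by
  have h : {s : Quaternion ℝ | ‖s‖ = 1} = Metric.sphere (0 : Quaternion ℝ) 1 := by
    ext s; simp
  have hc : IsCompact {s : Quaternion ℝ | ‖s‖ = 1} := by
    rw [h]; exact isCompact_sphere 0 1
  exact isCompact_iff_compactSpace.mp hc

/-- The orbit space `S³/T²` of the action `(t₁,t₂)·s = t₁ s t₂` is a closed interval. -/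
theorem S3_quotient_T2_homeomorphic_interval :
    Nonempty (Quot rel14 ≃ₜ (Set.Icc (0 : ℝ) 1)) := by
  let G : Quot rel14 → Set.Icc (0:ℝ) 1 := Quot.lift Fmap Fmap_respects
  have hcont : Continuous G := by
    apply continuous_quot_lift
    apply Continuous.subtype_mk
    exact ((Quaternion.continuous_imJ.comp continuous_subtype_val).pow 2).add
      ((Quaternion.continuous_imK.comp continuous_subtype_val).pow 2)
  have hinj : Function.Injective G := by
    intro q q'
    induction q using Quot.ind with | _ x =>
    induction q' using Quot.ind with | _ y =>
    intro h
    change Fmap x = Fmap y at h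
    apply Quot.sound
    have hval := congrArg Subtype.val h
    rw [Fmap_val, Fmap_val] at hval
    have hx1 : Quaternion.normSq x.1 = 1 := (norm_one_iff x.1).mp x.2
    have hy1 : Quaternion.normSq y.1 = 1 := (norm_one_iff y.1).mp y.2
    rw [Quaternion.normSq_def'] at hx1 hy1
    obtain ⟨t₁, t₂, h1, h2, hzz, hww⟩ :=
      exists_t ⟨x.1.re, x.1.imI⟩ ⟨x.1.imJ, x.1.imK⟩ ⟨y.1.re, y.1.imI⟩ ⟨y.1.imJ, y.1.imK⟩
        (by simp only [Complex.normSq_mk]; nlinarith)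
        (by simp only [Complex.normSq_mk]; nlinarith)
    refine ⟨t₁, t₂, h1, h2, ?_⟩
    have hx : x.1 = q2 ⟨x.1.re, x.1.imI⟩ ⟨x.1.imJ, x.1.imK⟩ := rfl
    have hy : y.1 = q2 ⟨y.1.re, y.1.imI⟩ ⟨y.1.imJ, y.1.imK⟩ := rfl
    rw [hx, hy, key, hzz, hww]
  have hsurj : Function.Surjective G := by
    rintro ⟨r, hr0, hr1⟩
    have h1r : (0:ℝ) ≤ 1 - r := by linarith
    refine ⟨Quot.mk _ ⟨q2 ⟨Real.sqrt (1-r), 0⟩ ⟨Real.sqrt r, 0⟩, ?_⟩, ?_⟩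
    · rw [norm_one_iff, Quaternion.normSq_def']
      simp [Quaternion.normSq_def', q2, Real.sq_sqrt h1r, Real.sq_sqrt hr0]
    · apply Subtype.ext
      change (Fmap _ : ℝ) = r
      rw [Fmap_val]
      simp [q2, Real.sq_sqrt hr0]
  let e : Quot rel14 ≃ Set.Icc (0:ℝ) 1 := Equiv.ofBijective G ⟨hinj, hsurj⟩
  exact ⟨hcont.homeoOfEquivCompactToT2 (f := e)⟩
end
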